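/- Let X = (x₀, x₁, x₂) ∈ ℝ³ with 0 < x₀ < x₁ < x₂ and x₀, x₁, x₂ linearly independent over ℚ, and consider any run of the Smallest Vector Algorithm started at X. Suppose s ∈ T satisfies ‖g_I'⁽ˢ⁾‖ ≤ 0.1·‖g_II'⁽ˢ⁾‖ and ∠(g_III'⁽ˢ⁾, g_II'⁽ˢ⁾) ≥ 30π/31. Then: 15π/31 ≤ ∠(g_III'⁽ˢ⁾, g_I'⁽ˢ⁾) ≤ 17π/31; 15π/31 ≤ ∠(g_II'⁽ˢ⁾, g_I'⁽ˢ⁾) ≤ 17π/31; ‖g_II'⁽ˢ⁾‖ ≥ 0.979·‖g_III'⁽ˢ⁾‖; ‖g_II'⁽ˢ⁾ + g_III'⁽ˢ⁾‖ ≤ 0.23·‖g_III'⁽ˢ⁾‖; and ‖g_I'⁽ˢ⁾ − g_II'⁽ˢ⁾ − g_III'⁽ˢ⁾‖ ≤ 0.33·‖g_III'⁽ˢ⁾‖. -/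

import Mathlib

open Filter InnerProductGeometry Polynomial

noncomputable section

abbrev E3 := EuclideanSpace ℝ (Fin 3)

/-- Identify a plain function `Fin 3 → ℝ` with a point of Euclidean 3-space. -/
def toE3 (v : Fin 3 → ℝ) : E3 := (WithLp.equiv 2 (Fin 3 → ℝ)).symm v

/-- The point of Euclidean 3-space attached to an integer vector. -/
def toR3 (v : Fin 3 → ℤ) : E3 := toE3 fun i => (v i : ℝ)

/-- Orthogonal projection of `h` onto the line `ℝ·X` (written `h''`). -/
def projL (X h : E3) : E3 := ((inner ℝ h X : ℝ) / ‖X‖ ^ 2) • X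

/-- Orthogonal projection of `h` onto the plane `X^⊥` (written `h'`). -/
def projPl (X h : E3) : E3 := h - projL X h

/-- `gᵢ'` : projection of the `i`-th column onto the plane `X^⊥`. -/
def colP (X : E3) (g : Fin 3 → Fin 3 → ℤ) (i : Fin 3) : E3 := projPl X (toR3 (g i))

/-- `gᵢ''` : projection of the `i`-th column onto the line `ℝ·X`. -/
def colL (X : E3) (g : Fin 3 → Fin 3 → ℤ) (i : Fin 3) : E3 := projL X (toR3 (g i))

def max3 (f : Fin 3 → ℝ) : ℝ := max (f 0) (max (f 1) (f 2))

def min3 (f : Fin 3 → ℝ) : ℝ := min (f 0) (min (f 1) (f 2))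

/-- One step of the Smallest Vector Algorithm: from the columns `g` to the columns `g'`. -/
def SVAStep (X : E3) (g g' : Fin 3 → Fin 3 → ℤ) : Prop :=
  ∃ f : Fin 3 → Fin 3 → ℤ,
    ((min3 ![‖colP X g 1 - colP X g 0‖, ‖colP X g 2 - colP X g 1‖, ‖colP X g 2 - colP X g 0‖]
        = ‖colP X g 1 - colP X g 0‖ ∧ f = ![g 0, g 1 - g 0, g 2]) ∨
     (min3 ![‖colP X g 1 - colP X g 0‖, ‖colP X g 2 - colP X g 1‖, ‖colP X g 2 - colP X g 0‖]
        = ‖colP X g 2 - colP X g 1‖ ∧ f = ![g 0, g 1, g 2 - g 1]) ∨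
     (min3 ![‖colP X g 1 - colP X g 0‖, ‖colP X g 2 - colP X g 1‖, ‖colP X g 2 - colP X g 0‖]
        = ‖colP X g 2 - colP X g 0‖ ∧ f = ![g 0, g 1, g 2 - g 0])) ∧
    ∃ σ : Equiv.Perm (Fin 3), (∀ i, g' i = f (σ i)) ∧
      ‖colL X g' 0‖ ≤ ‖colL X g' 1‖ ∧ ‖colL X g' 1‖ ≤ ‖colL X g' 2‖

/-- A run of the Smallest Vector Algorithm started at `X`: `g s i` is the `i`-th column of `G⁽ˢ⁾`. -/
def IsSVARun (X : E3) (g : ℕ → Fin 3 → Fin 3 → ℤ) : Prop :=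
  (∀ i j, g 0 i j = if i = j then 1 else 0) ∧ ∀ s, SVAStep X (g s) (g (s + 1))

/-- The cofactor vector `X⁽ˢ⁾ = ᵀG⁽ˢ⁾·X`. -/
def cofVec (X : E3) (g : Fin 3 → Fin 3 → ℤ) (i : Fin 3) : ℝ := (inner ℝ (toR3 (g i)) X : ℝ)


set_option maxHeartbeats 1000000

section AuxLemmas

open Real

variable {V : Type*} [NormedAddCommGroup V] [InnerProductSpace ℝ V]

local notation "⟪" x ", " y "⟫" => @inner ℝ _ _ x y

lemma my_angle_triangle (x y z : V) (hy : y ≠ 0) : angle x z ≤ angle x y + angle y z := by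
  by_cases hx : x = 0
  · subst hx
    rw [angle_zero_left, angle_zero_left]
    linarith [angle_nonneg y z]
  by_cases hz : z = 0
  · subst hz
    rw [angle_zero_right, angle_zero_right]
    linarith [angle_nonneg x y]
  have hnx : (0:ℝ) < ‖x‖ := norm_pos_iff.2 hx
  have hny : (0:ℝ) < ‖y‖ := norm_pos_iff.2 hy
  have hnz : (0:ℝ) < ‖z‖ := norm_pos_iff.2 hz
  rcases le_or_gt π (angle x y + angle y z) with hsum | hsum
  · exact (angle_le_pi x z).trans hsum
  by_contra hlt
  push_neg at hlt
  have hc1 : Real.cos (angle x z) < Real.cos (angle x y + angle y z) :=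
    Real.cos_lt_cos_of_nonneg_of_le_pi
      (add_nonneg (angle_nonneg _ _) (angle_nonneg _ _)) (angle_le_pi _ _) hlt
  set a1 : ℝ := ⟪x, y⟫ with ha1
  set a2 : ℝ := ⟪y, z⟫ with ha2
  set a3 : ℝ := ⟪x, z⟫ with ha3
  set u1 : ℝ := ⟪x, x⟫ * ⟪y, y⟫ - a1 * a1 with hu1d
  set u2 : ℝ := ⟪y, y⟫ * ⟪z, z⟫ - a2 * a2 with hu2d
  have hu1 : 0 ≤ u1 := by have := real_inner_mul_inner_self_le x y; simp [hu1d]; rw [← real_inner_self_eq_norm_sq, ← real_inner_self_eq_norm_sq]; linarith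
  have hu2 : 0 ≤ u2 := by have := real_inner_mul_inner_self_le y z; simp [hu2d]; rw [← real_inner_self_eq_norm_sq, ← real_inner_self_eq_norm_sq]; linarith
  set p : V := (‖y‖^2) • x - a1 • y with hp
  set q : V := (‖y‖^2) • z - a2 • y with hq
  have hyy : ⟪y, y⟫ = (‖y‖:ℝ)^2 := real_inner_self_eq_norm_sq y
  have hpq : ⟪p, q⟫ = ‖y‖^2 * (‖y‖^2 * a3 - a1 * a2) := by
    simp only [hp, hq, inner_sub_left, inner_sub_right, real_inner_smul_left,
      real_inner_smul_right]
    rw [ha1, ha2, ha3, real_inner_comm y x, real_inner_comm z y, hyy]; ring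
  have hpp : ⟪p, p⟫ = ‖y‖^2 * u1 := by
    simp only [hp, inner_sub_left, inner_sub_right, real_inner_smul_left, real_inner_smul_right]
    rw [hu1d, ha1, real_inner_comm y x, hyy]; ring
  have hqq : ⟪q, q⟫ = ‖y‖^2 * u2 := by
    simp only [hq, inner_sub_left, inner_sub_right, real_inner_smul_left, real_inner_smul_right]
    rw [hu2d, ha2, real_inner_comm z y, hyy]; ring
  have cs := real_inner_mul_inner_self_le p q
  rw [hpq, hpp, hqq] at cs
  set W : ℝ := ‖y‖^2 * a3 - a1 * a2 with hW
  have hW2 : W * W ≤ u1 * u2 := by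
    have h4 : (0:ℝ) < ‖y‖^2 * ‖y‖^2 := by positivity
    nlinarith [sq_nonneg (‖y‖:ℝ)]
  have hnegW : -W ≤ Real.sqrt (u1 * u2) := by
    rcases le_or_gt (-W) 0 with h | h
    · exact h.trans (Real.sqrt_nonneg _)
    · have h2 : (-W)^2 ≤ u1 * u2 := by nlinarith
      have := Real.sqrt_le_sqrt h2
      rwa [Real.sqrt_sq h.le] at this
  have key : Real.cos (angle x y + angle y z) ≤ Real.cos (angle x z) := by
    have hposn : (0:ℝ) < (‖x‖*‖y‖)*(‖y‖*‖z‖) := by positivity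
    rw [← mul_le_mul_iff_of_pos_right hposn, Real.cos_add]
    have e1 := cos_angle_mul_norm_mul_norm x y
    have e2 := cos_angle_mul_norm_mul_norm y z
    have e3 := cos_angle_mul_norm_mul_norm x z
    have f1 := sin_angle_mul_norm_mul_norm x y
    have f2 := sin_angle_mul_norm_mul_norm y z
    have hS : Real.sqrt u1 * Real.sqrt u2 = Real.sqrt (u1 * u2) := (Real.sqrt_mul hu1 _).symm
    calc (Real.cos (angle x y) * Real.cos (angle y z)
            - Real.sin (angle x y) * Real.sin (angle y z)) * ((‖x‖*‖y‖)*(‖y‖*‖z‖))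
        = (Real.cos (angle x y) * (‖x‖*‖y‖)) * (Real.cos (angle y z) * (‖y‖*‖z‖))
            - (Real.sin (angle x y) * (‖x‖*‖y‖)) * (Real.sin (angle y z) * (‖y‖*‖z‖)) := by ring
      _ = a1 * a2 - Real.sqrt u1 * Real.sqrt u2 := by rw [e1, e2, f1, f2]
      _ = a1 * a2 - Real.sqrt (u1 * u2) := by rw [hS]
      _ ≤ a1 * a2 + W := by linarith
      _ = ‖y‖^2 * a3 := by rw [hW]; ring
      _ = (Real.cos (angle x z) * (‖x‖*‖z‖)) * (‖y‖*‖y‖) := by rw [e3]; ring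
      _ = Real.cos (angle x z) * ((‖x‖*‖y‖)*(‖y‖*‖z‖)) := by ring
  linarith

lemma flat_core (a b c : V)
    (hab : ‖c‖ < ‖b - a‖) (hac : ‖c‖ < ‖c - a‖)
    (h2 : ‖b‖ ≤ ‖c‖) (hflat1 : ‖a‖ ≤ 0.1 * ‖b‖)
    (hflat2 : 30 * π / 31 ≤ angle c b) :
    (15 * π / 31 ≤ angle c a ∧ angle c a ≤ 17 * π / 31) ∧
    (15 * π / 31 ≤ angle b a ∧ angle b a ≤ 17 * π / 31) ∧
    0.979 * ‖c‖ ≤ ‖b‖ ∧ ‖b + c‖ ≤ 0.23 * ‖c‖ ∧ ‖a - b - c‖ ≤ 0.33 * ‖c‖ := by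
  have hπ1 : 3.141592 < π := Real.pi_gt_d6
  have hπ2 : π < 3.141593 := Real.pi_lt_d6
  have hA0 : 0 ≤ ‖a‖ := norm_nonneg a
  have hC0 : 0 ≤ ‖c‖ := norm_nonneg c
  have hS0 : 0 ≤ ‖b + c‖ := norm_nonneg _
  have hb : b ≠ 0 := by
    intro h
    rw [h, zero_sub, norm_neg] at hab
    rw [h, norm_zero] at hflat1
    nlinarith
  have hB0 : 0 < ‖b‖ := norm_pos_iff.2 hb
  have hC0' : 0 < ‖c‖ := lt_of_lt_of_le hB0 h2
  have hc : c ≠ 0 := norm_pos_iff.1 hC0'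
  have i1 : ‖c‖ ^ 2 < ‖b‖ ^ 2 - 2 * ⟪b, a⟫ + ‖a‖ ^ 2 := by
    have := pow_lt_pow_left₀ hab hC0 (two_ne_zero)
    rwa [norm_sub_sq_real] at this
  have i2 : 2 * ⟪c, a⟫ < ‖a‖ ^ 2 := by
    have := pow_lt_pow_left₀ hac hC0 (two_ne_zero)
    rw [norm_sub_sq_real] at this
    linarith
  have hK : ((π / 31) ^ 2 : ℝ) < 0.0102702 := by nlinarith
  have ibc : ⟪c, b⟫ ≤ -(1 - (π / 31) ^ 2 / 2) * (‖c‖ * ‖b‖) := by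
    have h30 : Real.cos (angle c b) ≤ Real.cos (30 * π / 31) :=
      Real.cos_le_cos_of_nonneg_of_le_pi (by positivity) (angle_le_pi c b) hflat2
    have hrw : Real.cos (30 * π / 31) = -Real.cos (π / 31) := by
      rw [show (30 * π / 31 : ℝ) = π - π / 31 by ring, Real.cos_pi_sub]
    have hcos31 : 1 - (π / 31) ^ 2 / 2 ≤ Real.cos (π / 31) := Real.one_sub_sq_div_two_le_cos
    have e := cos_angle_mul_norm_mul_norm c b
    have hmul : Real.cos (angle c b) * (‖c‖ * ‖b‖) ≤ (-(1 - (π / 31) ^ 2 / 2)) * (‖c‖ * ‖b‖) := by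
      apply mul_le_mul_of_nonneg_right _ (by positivity)
      rw [hrw] at h30; linarith
    rw [e] at hmul; exact hmul
  have hS2 : ‖b + c‖ ^ 2 ≤ (‖c‖ - ‖b‖) ^ 2 + (π / 31) ^ 2 * (‖b‖ * ‖c‖) := by
    have e : ‖b + c‖ ^ 2 = ‖b‖ ^ 2 + 2 * ⟪b, c⟫ + ‖c‖ ^ 2 := norm_add_sq_real b c
    rw [real_inner_comm c b] at e
    nlinarith
  have hCS : -(‖b + c‖ * ‖a‖) ≤ ⟪b, a⟫ + ⟪c, a⟫ := by
    have h1 := abs_real_inner_le_norm (b + c) a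
    have h2 : ⟪b + c, a⟫ = ⟪b, a⟫ + ⟪c, a⟫ := inner_add_left b c a
    have := neg_abs_le (⟪b + c, a⟫ : ℝ)
    linarith
  have key1 : ‖c‖ ^ 2 - ‖b‖ ^ 2 < 2 * ‖a‖ ^ 2 + 2 * ‖a‖ * ‖b + c‖ := by
    have h3 : (2:ℝ) * ‖a‖ * ‖b + c‖ = 2 * (‖b + c‖ * ‖a‖) := by ring
    linarith
  have hB : 0.979 * ‖c‖ ≤ ‖b‖ := by
    by_contra hcon
    push_neg at hcon
    have e1 : 2 * ‖a‖ * ‖b + c‖ ≤ (400 * ‖a‖ ^ 2 + 361 * ‖b + c‖ ^ 2) / 380 := by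
      nlinarith [sq_nonneg (20 * ‖a‖ - 19 * ‖b + c‖)]
    have e2 : ‖a‖ ^ 2 ≤ 0.01 * ‖b‖ ^ 2 := by nlinarith
    have e3 : ‖b + c‖ ^ 2 ≤ (‖c‖ - ‖b‖) ^ 2 + 0.0102702 * (‖b‖ * ‖c‖) := by
      have hK' : (π / 31) ^ 2 * (‖b‖ * ‖c‖) ≤ 0.0102702 * (‖b‖ * ‖c‖) :=
        mul_le_mul_of_nonneg_right hK.le (by positivity)
      linarith
    have e4 := mul_lt_mul_of_pos_right hcon hB0
    have e5 := mul_lt_mul_of_pos_right hcon hC0'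
    nlinarith [key1, e1, e2, e3, e4, e5, mul_pos hC0' hC0']
  have hS23 : ‖b + c‖ ≤ 0.23 * ‖c‖ := by
    by_contra hcon
    push_neg at hcon
    have f1 : (‖c‖ - ‖b‖) ^ 2 ≤ 0.000441 * ‖c‖ ^ 2 := by nlinarith [hB, h2]
    have f2 : ‖b‖ * ‖c‖ ≤ ‖c‖ ^ 2 := by nlinarith [h2, hC0]
    have f3 : ‖b + c‖ ^ 2 ≤ 0.0529 * ‖c‖ ^ 2 := by
      have hK' : (π / 31) ^ 2 * (‖b‖ * ‖c‖) ≤ 0.0102702 * (‖b‖ * ‖c‖) :=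
        mul_le_mul_of_nonneg_right hK.le (by positivity)
      nlinarith [hS2]
    nlinarith [f3, hcon, hC0, mul_pos hC0' hC0']
  have h5 : ‖a - b - c‖ ≤ 0.33 * ‖c‖ := by
    have e : a - b - c = a - (b + c) := by abel
    rw [e]
    have := norm_sub_le a (b + c)
    nlinarith
  have hangles : (15 * π / 31 ≤ angle c a ∧ angle c a ≤ 17 * π / 31) ∧
      (15 * π / 31 ≤ angle b a ∧ angle b a ≤ 17 * π / 31) := by
    by_cases ha : a = 0
    · subst ha
      rw [angle_zero_right, angle_zero_right]
      have := Real.pi_pos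
      exact ⟨⟨by linarith, by linarith⟩, by linarith, by linarith⟩
    · have hA0' : 0 < ‖a‖ := norm_pos_iff.2 ha
      have hcos15 : (0.05 : ℝ) < Real.cos (15 * π / 31) := by
        rw [show (15 * π / 31 : ℝ) = π / 2 - π / 62 by ring, Real.cos_pi_div_two_sub]
        have hs := Real.sin_gt_sub_cube (x := π / 62) (by positivity)
        have hx1 : (π / 62 : ℝ) < 0.0506709 := by linarith
        have hx2 : (0.0506708 : ℝ) < π / 62 := by linarith
        have hcube : (π / 62 : ℝ) ^ 3 ≤ 0.0506709 ^ 3 :=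
          pow_le_pow_left₀ (by positivity) hx1.le 3
        nlinarith
      have h15pi : (15 * π / 31 : ℝ) ≤ π := by linarith [Real.pi_pos]
      have lower1 : 15 * π / 31 ≤ angle c a := by
        by_contra hcon
        push_neg at hcon
        have h1 : Real.cos (15 * π / 31) < Real.cos (angle c a) :=
          Real.cos_lt_cos_of_nonneg_of_le_pi (angle_nonneg c a) h15pi hcon
        have h2' : Real.cos (angle c a) * (‖c‖ * ‖a‖) = ⟪c, a⟫ :=
          cos_angle_mul_norm_mul_norm c a
        have hAC : ‖a‖ ≤ 0.1 * ‖c‖ := by linarith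
        have h3 : (⟪c, a⟫ : ℝ) ≤ 0.05 * (‖c‖ * ‖a‖) := by
          have haa := mul_le_mul_of_nonneg_right hAC hA0'.le
          have e : ‖a‖ ^ 2 = ‖a‖ * ‖a‖ := sq ‖a‖
          linarith
        have m1 := mul_lt_mul_of_pos_right h1 (mul_pos hC0' hA0')
        have m2 := mul_lt_mul_of_pos_right hcos15 (mul_pos hC0' hA0')
        linarith
      have lower2 : 15 * π / 31 ≤ angle b a := by
        by_contra hcon
        push_neg at hcon
        have h1 : Real.cos (15 * π / 31) < Real.cos (angle b a) :=
          Real.cos_lt_cos_of_nonneg_of_le_pi (angle_nonneg b a) h15pi hcon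
        have h2' : Real.cos (angle b a) * (‖b‖ * ‖a‖) = ⟪b, a⟫ :=
          cos_angle_mul_norm_mul_norm b a
        have h3 : (⟪b, a⟫ : ℝ) ≤ 0.05 * (‖b‖ * ‖a‖) := by
          have hb2c2 : ‖b‖ ^ 2 ≤ ‖c‖ ^ 2 := pow_le_pow_left₀ hB0.le h2 2
          have haa := mul_le_mul_of_nonneg_right hflat1 hA0'.le
          have e : ‖a‖ ^ 2 = ‖a‖ * ‖a‖ := sq ‖a‖
          linarith
        have m1 := mul_lt_mul_of_pos_right h1 (mul_pos hB0 hA0')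
        have m2 := mul_lt_mul_of_pos_right hcos15 (mul_pos hB0 hA0')
        linarith
      have upper1 : angle c a ≤ 17 * π / 31 := by
        have t := my_angle_triangle c (-b) a (neg_ne_zero.2 hb)
        rw [angle_neg_right, angle_neg_left] at t
        linarith
      have upper2 : angle b a ≤ 17 * π / 31 := by
        have t := my_angle_triangle b (-c) a (neg_ne_zero.2 hc)
        rw [angle_neg_right, angle_neg_left, angle_comm b c] at t
        linarith
      exact ⟨⟨lower1, upper1⟩, lower2, upper2⟩
  exact ⟨hangles.1, hangles.2, hB, hS23, h5⟩

end AuxLemmas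

lemma toR3_sub (u v : Fin 3 → ℤ) : toR3 (u - v) = toR3 u - toR3 v := by
  ext i
  simp [toR3, toE3]

lemma projL_sub (X h k : E3) : projL X (h - k) = projL X h - projL X k := by
  unfold projL
  rw [inner_sub_left, sub_div, sub_smul]

lemma projPl_sub (X h k : E3) : projPl X (h - k) = projPl X h - projPl X k := by
  unfold projPl
  rw [projL_sub]
  abel

lemma le_max3 (f : Fin 3 → ℝ) (i : Fin 3) : f i ≤ max3 f := by
  fin_cases i
  · exact le_max_left _ _
  · exact le_trans (le_max_left _ _) (le_max_right _ _)
  · exact le_trans (le_max_right _ _) (le_max_right _ _)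

lemma min3_le (f : Fin 3 → ℝ) (i : Fin 3) : min3 f ≤ f i := by
  fin_cases i
  · exact min_le_left _ _
  · exact le_trans (min_le_right _ _) (min_le_left _ _)
  · exact le_trans (min_le_right _ _) (min_le_right _ _)

lemma step_bound (Y : E3) (g g' : Fin 3 → Fin 3 → ℤ) (h : SVAStep Y g g')
    (hT : max3 (fun i => ‖colP Y g i‖) < max3 (fun i => ‖colP Y g' i‖)) :
    max3 (fun i => ‖colP Y g i‖) <
      min3 ![‖colP Y g 1 - colP Y g 0‖, ‖colP Y g 2 - colP Y g 1‖,
        ‖colP Y g 2 - colP Y g 0‖] := by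
  obtain ⟨f, hcase, σ', hperm, -, -⟩ := h
  set M := max3 (fun i => ‖colP Y g i‖) with hM
  set v := ![‖colP Y g 1 - colP Y g 0‖, ‖colP Y g 2 - colP Y g 1‖, ‖colP Y g 2 - colP Y g 0‖]
    with hv
  have main : ∀ d : ℝ, min3 v = d → (∀ j, ‖projPl Y (toR3 (f j))‖ ≤ max M d) →
      M < min3 v := by
    intro d hd hle
    have hcol : ∀ i, ‖colP Y g' i‖ ≤ max M d := by
      intro i
      have : colP Y g' i = projPl Y (toR3 (f (σ' i))) := by
        simp only [colP, hperm i]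
      rw [this]
      exact hle (σ' i)
    have hnew : max3 (fun i => ‖colP Y g' i‖) ≤ max M d :=
      max_le (hcol 0) (max_le (hcol 1) (hcol 2))
    have hlt : M < max M d := lt_of_lt_of_le hT hnew
    rw [hd]
    rcases lt_max_iff.1 hlt with h | h
    · exact absurd h (lt_irrefl M)
    · exact h
  rcases hcase with ⟨hmin, hf⟩ | ⟨hmin, hf⟩ | ⟨hmin, hf⟩ <;> subst hf <;>
    [apply main _ hmin; apply main _ hmin; apply main _ hmin] <;> intro j <;> fin_cases j
  · exact le_trans (le_max3 (fun i => ‖colP Y g i‖) 0) (le_max_left _ _)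
  · show ‖projPl Y (toR3 (g 1 - g 0))‖ ≤ _
    rw [toR3_sub, projPl_sub]
    exact le_max_right _ _
  · exact le_trans (le_max3 (fun i => ‖colP Y g i‖) 2) (le_max_left _ _)
  · exact le_trans (le_max3 (fun i => ‖colP Y g i‖) 0) (le_max_left _ _)
  · exact le_trans (le_max3 (fun i => ‖colP Y g i‖) 1) (le_max_left _ _)
  · show ‖projPl Y (toR3 (g 2 - g 1))‖ ≤ _
    rw [toR3_sub, projPl_sub]
    exact le_max_right _ _
  · exact le_trans (le_max3 (fun i => ‖colP Y g i‖) 0) (le_max_left _ _)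
  · exact le_trans (le_max3 (fun i => ‖colP Y g i‖) 1) (le_max_left _ _)
  · show ‖projPl Y (toR3 (g 2 - g 0))‖ ≤ _
    rw [toR3_sub, projPl_sub]
    exact le_max_right _ _

/-- Flat Triangle Lemma. -/
theorem sva_flat_triangle (Y : E3) (h0 : 0 < Y 0) (h01 : Y 0 < Y 1) (h12 : Y 1 < Y 2)
    (hind : LinearIndependent ℚ fun i : Fin 3 => Y i)
    (g : ℕ → Fin 3 → Fin 3 → ℤ) (hg : IsSVARun Y g) (s : ℕ)
    (σ : Equiv.Perm (Fin 3))
    (hσ : ‖colP Y (g s) (σ 0)‖ ≤ ‖colP Y (g s) (σ 1)‖ ∧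
          ‖colP Y (g s) (σ 1)‖ ≤ ‖colP Y (g s) (σ 2)‖)
    (hT : (max3 fun i => ‖colP Y (g s) i‖) < max3 fun i => ‖colP Y (g (s + 1)) i‖)
    (hflat1 : ‖colP Y (g s) (σ 0)‖ ≤ 0.1 * ‖colP Y (g s) (σ 1)‖)
    (hflat2 : 30 * Real.pi / 31 ≤
      InnerProductGeometry.angle (colP Y (g s) (σ 2)) (colP Y (g s) (σ 1))) :
    (15 * Real.pi / 31 ≤ InnerProductGeometry.angle (colP Y (g s) (σ 2)) (colP Y (g s) (σ 0)) ∧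
      InnerProductGeometry.angle (colP Y (g s) (σ 2)) (colP Y (g s) (σ 0)) ≤ 17 * Real.pi / 31) ∧
    (15 * Real.pi / 31 ≤ InnerProductGeometry.angle (colP Y (g s) (σ 1)) (colP Y (g s) (σ 0)) ∧
      InnerProductGeometry.angle (colP Y (g s) (σ 1)) (colP Y (g s) (σ 0)) ≤ 17 * Real.pi / 31) ∧
    0.979 * ‖colP Y (g s) (σ 2)‖ ≤ ‖colP Y (g s) (σ 1)‖ ∧
    ‖colP Y (g s) (σ 1) + colP Y (g s) (σ 2)‖ ≤ 0.23 * ‖colP Y (g s) (σ 2)‖ ∧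
    ‖colP Y (g s) (σ 0) - colP Y (g s) (σ 1) - colP Y (g s) (σ 2)‖
      ≤ 0.33 * ‖colP Y (g s) (σ 2)‖  := by
  have hkey := step_bound Y (g s) (g (s + 1)) (hg.2 s) hT
  have hd10 : max3 (fun i => ‖colP Y (g s) i‖) < ‖colP Y (g s) 1 - colP Y (g s) 0‖ :=
    lt_of_lt_of_le hkey (min3_le _ 0)
  have hd21 : max3 (fun i => ‖colP Y (g s) i‖) < ‖colP Y (g s) 2 - colP Y (g s) 1‖ :=
    lt_of_lt_of_le hkey (min3_le _ 1)
  have hd20 : max3 (fun i => ‖colP Y (g s) i‖) < ‖colP Y (g s) 2 - colP Y (g s) 0‖ :=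
    lt_of_lt_of_le hkey (min3_le _ 2)
  have hdiff : ∀ i j : Fin 3, i ≠ j →
      max3 (fun k => ‖colP Y (g s) k‖) < ‖colP Y (g s) i - colP Y (g s) j‖ := by
    intro i j hij
    fin_cases i <;> fin_cases j <;>
      first
        | exact absurd rfl hij
        | exact hd10
        | exact hd21
        | exact hd20
        | (rw [norm_sub_rev]; first | exact hd10 | exact hd21 | exact hd20)
  have hne : ∀ i j : Fin 3, i ≠ j → σ i ≠ σ j := fun i j hij h => hij (σ.injective h)
  have hab : ‖colP Y (g s) (σ 2)‖ < ‖colP Y (g s) (σ 1) - colP Y (g s) (σ 0)‖ :=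
    lt_of_le_of_lt (le_max3 (fun k => ‖colP Y (g s) k‖) (σ 2)) (hdiff (σ 1) (σ 0) (hne 1 0 (by decide)))
  have hac : ‖colP Y (g s) (σ 2)‖ < ‖colP Y (g s) (σ 2) - colP Y (g s) (σ 0)‖ :=
    lt_of_le_of_lt (le_max3 (fun k => ‖colP Y (g s) k‖) (σ 2)) (hdiff (σ 2) (σ 0) (hne 2 0 (by decide)))
  exact flat_core (colP Y (g s) (σ 0)) (colP Y (g s) (σ 1)) (colP Y (g s) (σ 2))
    hab hac hσ.2 hflat1 hflat2


end
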